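/- In cake cutting with two single minded agents demanding D_1 = [0, 0.4] and D_2 = [0.4, 1], the envy-free allocation x_1 = [0, 0.2] ∪ [0.4, 0.7], x_2 = [0.2, 0.4] ∪ [0.7, 1] admits no supporting CAEI price density: there is no integrable p ≥ 0 on [0,1] with p(x_1) ≤ 1, p(x_2) ≤ 1, p(D_1) > 1, and p(D_2) > 1. -/

import Mathlib

open MeasureTheory Set

lemma aedisj_Icc (a b c : ℝ) (hb : b ≤ c) :
    MeasureTheory.AEDisjoint volume (Icc a b) (Icc b c) := by
  have : Icc a b ∩ Icc b c ⊆ {b} := by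
    intro x hx
    have := hx.1.2
    have := hx.2.1
    simp only [mem_singleton_iff]
    linarith
  exact measure_mono_null this (measure_singleton b)

/-- In cake cutting with demands D₁ = [0,0.4], D₂ = [0.4,1], the envy-free
allocation x₁ = [0,0.2] ∪ [0.4,0.7], x₂ = [0.2,0.4] ∪ [0.7,1] admits no
supporting CAEI price density. -/
theorem cake_envy_free_no_caei_prices :
    ¬ ∃ p : ℝ → ℝ,
      IntegrableOn p (Icc (0 : ℝ) 1) ∧
      (∀ t, 0 ≤ p t) ∧
      (∫ t in Icc (0 : ℝ) 0.2 ∪ Icc 0.4 0.7, p t) ≤ 1 ∧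
      (∫ t in Icc (0.2 : ℝ) 0.4 ∪ Icc 0.7 1, p t) ≤ 1 ∧
      1 < (∫ t in Icc (0 : ℝ) 0.4, p t) ∧
      1 < (∫ t in Icc (0.4 : ℝ) 1, p t) := by
  rintro ⟨p, hint, _, h13, h24, h12, h34⟩
  have iA : IntegrableOn p (Icc (0:ℝ) 0.2) :=
    hint.mono_set (Icc_subset_Icc le_rfl (by norm_num))
  have iB : IntegrableOn p (Icc (0.2:ℝ) 0.4) :=
    hint.mono_set (Icc_subset_Icc (by norm_num) (by norm_num))
  have iC : IntegrableOn p (Icc (0.4:ℝ) 0.7) :=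
    hint.mono_set (Icc_subset_Icc (by norm_num) (by norm_num))
  have iD : IntegrableOn p (Icc (0.7:ℝ) 1) :=
    hint.mono_set (Icc_subset_Icc (by norm_num) le_rfl)
  -- split [0,0.4] = [0,0.2] ∪ [0.2,0.4]
  have e1 : (∫ t in Icc (0:ℝ) 0.4, p t)
      = (∫ t in Icc (0:ℝ) 0.2, p t) + ∫ t in Icc (0.2:ℝ) 0.4, p t := by
    rw [← Icc_union_Icc_eq_Icc (a := (0:ℝ)) (b := 0.2) (c := 0.4) (by norm_num) (by norm_num)]
    exact integral_union_ae (aedisj_Icc 0 0.2 0.4 (by norm_num))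
      measurableSet_Icc.nullMeasurableSet iA iB
  have e2 : (∫ t in Icc (0.4:ℝ) 1, p t)
      = (∫ t in Icc (0.4:ℝ) 0.7, p t) + ∫ t in Icc (0.7:ℝ) 1, p t := by
    rw [← Icc_union_Icc_eq_Icc (a := (0.4:ℝ)) (b := 0.7) (c := 1) (by norm_num) (by norm_num)]
    exact integral_union_ae (aedisj_Icc 0.4 0.7 1 (by norm_num))
      measurableSet_Icc.nullMeasurableSet iC iD
  have e3 : (∫ t in Icc (0:ℝ) 0.2 ∪ Icc 0.4 0.7, p t)
      = (∫ t in Icc (0:ℝ) 0.2, p t) + ∫ t in Icc (0.4:ℝ) 0.7, p t := by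
    refine setIntegral_union ?_ measurableSet_Icc iA iC
    exact Set.disjoint_left.mpr (fun x hx hx' => by
      have := hx.2; have := hx'.1; norm_num at *; linarith)
  have e4 : (∫ t in Icc (0.2:ℝ) 0.4 ∪ Icc 0.7 1, p t)
      = (∫ t in Icc (0.2:ℝ) 0.4, p t) + ∫ t in Icc (0.7:ℝ) 1, p t := by
    refine setIntegral_union ?_ measurableSet_Icc iB iD
    exact Set.disjoint_left.mpr (fun x hx hx' => by
      have := hx.2; have := hx'.1; norm_num at *; linarith)
  rw [e3] at h13; rw [e4] at h24; rw [e1] at h12; rw [e2] at h34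
  linarith
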